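/- Pauli twirling breaks channel semigroup Markovianity for Hadamard dephasing: let γ > 0, t > 0, L = (X + Z)/√2, D(ρ) = γ·(L ρ L − ρ), and let f_x, f_y, f_z be the Pauli eigenvalues of exp(t·D). Then the Pauli-Lindblad parameters of the Pauli-twirled channel satisfy λ_x = λ_z = γt/2 and λ_y = −½·Real.log(Real.cosh(γt)); in particular λ_y < 0. -/

import Mathlib

attribute [local instance] Matrix.linftyOpNormedAddCommGroup Matrix.linftyOpNormedRing
  Matrix.linftyOpNormedAlgebra

/-- The space of 2×2 complex matrices. -/
abbrev M2 : Type := Matrix (Fin 2) (Fin 2) ℂ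

def Xm : M2 := !![0, 1; 1, 0]
def Ym : M2 := !![0, -Complex.I; Complex.I, 0]
def Zm : M2 := !![1, 0; 0, -1]

/-- The Hadamard jump operator `L_φ = (X + Z)/√2`. -/
noncomputable def Lφ : M2 := ((Real.sqrt 2 : ℝ) : ℂ)⁻¹ • (Xm + Zm)

/-- Porting aid: the operator-norm topological-ring structure on `M2 →L[ℂ] M2` (found
automatically by the older library) is no longer found by instance search. -/
instance instIsTopologicalRingM2CLM : IsTopologicalRing (M2 →L[ℂ] M2) :=
  let h : IsTopologicalRing (@ContinuousLinearMap ℂ ℂ _ _ (RingHom.id ℂ) M2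
    (PseudoMetricSpace.toUniformSpace.toTopologicalSpace) _ M2
    (PseudoMetricSpace.toUniformSpace.toTopologicalSpace) _ _ _) := inferInstance
  h

lemma expSeries_summable_M2 (A : @ContinuousLinearMap ℂ ℂ _ _ (RingHom.id ℂ) M2
    (PseudoMetricSpace.toUniformSpace.toTopologicalSpace) _ M2
    (PseudoMetricSpace.toUniformSpace.toTopologicalSpace) _ _ _) :
    Summable (fun n : ℕ => (n.factorial : ℂ)⁻¹ • A ^ n) :=
  @NormedSpace.expSeries_summable' ℂ _ _ _ _ _ _ ContinuousLinearMap.instCompleteSpace A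

lemma exp_apply_eigen (A : M2 →L[ℂ] M2) (v : M2) (c : ℂ) (h : A v = c • v) :
    NormedSpace.exp A v = NormedSpace.exp c • v := by
  have hpow : ∀ n : ℕ, (A ^ n) v = c ^ n • v := by
    intro n
    induction n with
    | zero => simp
    | succ n ih =>
      rw [pow_succ, pow_succ, ContinuousLinearMap.mul_apply, h, map_smul, ih, smul_smul, mul_comm]
  have hsA : Summable (fun n : ℕ => (n.factorial : ℂ)⁻¹ • A ^ n) := expSeries_summable_M2 A
  have hsc : Summable (fun n : ℕ => (n.factorial : ℂ)⁻¹ • c ^ n) := NormedSpace.expSeries_summable' c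
  rw [NormedSpace.exp_eq_tsum (𝕂 := ℂ), NormedSpace.exp_eq_tsum (𝕂 := ℂ)]
  beta_reduce
  have := (ContinuousLinearMap.apply ℂ M2 v).map_tsum hsA
  simp only [ContinuousLinearMap.apply_apply] at this
  refine this.trans ?_
  change ∑' n : ℕ, ((n.factorial : ℂ)⁻¹ • A ^ n) v = _
  simp_rw [ContinuousLinearMap.smul_apply, hpow, smul_smul]
  rw [← Summable.tsum_smul_const (hsc.congr (fun n => by rw [smul_eq_mul])) v]
  exact tsum_congr fun n => by rw [smul_eq_mul]

lemma sqrt2_inv_sq : ((Real.sqrt 2 : ℝ) : ℂ)⁻¹ * ((Real.sqrt 2 : ℝ) : ℂ)⁻¹ = (2 : ℂ)⁻¹ := by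
  rw [← mul_inv, ← Complex.ofReal_mul, Real.mul_self_sqrt (by norm_num)]
  norm_num

lemma LmL (M : M2) : Lφ * M * Lφ = (2 : ℂ)⁻¹ • ((Xm + Zm) * M * (Xm + Zm)) := by
  simp only [Lφ, smul_mul_assoc, mul_smul_comm, smul_smul, sqrt2_inv_sq]

lemma LXL : Lφ * Xm * Lφ = Zm := by
  rw [LmL]
  ext i j
  fin_cases i <;> fin_cases j <;>
    simp [Xm, Zm, Matrix.mul_apply, Fin.sum_univ_two] <;> norm_num

lemma LZL : Lφ * Zm * Lφ = Xm := by
  rw [LmL]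
  ext i j
  fin_cases i <;> fin_cases j <;>
    simp [Xm, Zm, Matrix.mul_apply, Fin.sum_univ_two] <;> norm_num

lemma LYL : Lφ * Ym * Lφ = -Ym := by
  rw [LmL]
  ext i j
  fin_cases i <;> fin_cases j <;>
    simp [Xm, Ym, Zm, Matrix.mul_apply, Fin.sum_univ_two] <;> ring_nf

theorem twirl_breaks_CSM_hadamard_dephasing (γ t : ℝ) (hγ : 0 < γ) (ht : 0 < t)
    (D : M2 →L[ℂ] M2) (hD : ∀ ρ : M2, D ρ = (γ : ℂ) • (Lφ * ρ * Lφ - ρ))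
    (fx fy fz : ℝ)
    (hfx : (fx : ℂ) = (1 / 2 : ℂ) * Matrix.trace (Xm * NormedSpace.exp (t • D) Xm))
    (hfy : (fy : ℂ) = (1 / 2 : ℂ) * Matrix.trace (Ym * NormedSpace.exp (t • D) Ym))
    (hfz : (fz : ℂ) = (1 / 2 : ℂ) * Matrix.trace (Zm * NormedSpace.exp (t • D) Zm)) :
    (1 / 4 : ℝ) * (Real.log fx - Real.log fy - Real.log fz) = γ * t / 2 ∧
    (1 / 4 : ℝ) * (-Real.log fx - Real.log fy + Real.log fz) = γ * t / 2 ∧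
    (1 / 4 : ℝ) * (-Real.log fx + Real.log fy - Real.log fz)
      = -(1 / 2 : ℝ) * Real.log (Real.cosh (γ * t)) ∧
    (1 / 4 : ℝ) * (-Real.log fx + Real.log fy - Real.log fz) < 0 := by
  set e : ℂ := ((Real.exp (-(2 * γ * t)) : ℝ) : ℂ) with he
  have hexpc : NormedSpace.exp ((-(2 * γ * t) : ℝ) : ℂ) = e := by
    rw [← Complex.exp_eq_exp_ℂ, ← Complex.ofReal_exp]
  -- eigen relations
  have h1 : (t • D) (Xm + Zm) = (0 : ℂ) • (Xm + Zm) := by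
    have hv : Lφ * (Xm + Zm) * Lφ = Xm + Zm := by
      rw [mul_add, add_mul, LXL, LZL]; abel
    rw [ContinuousLinearMap.smul_apply, hD, hv]
    simp
  have h2 : (t • D) (Xm - Zm) = ((-(2 * γ * t) : ℝ) : ℂ) • (Xm - Zm) := by
    have hv : Lφ * (Xm - Zm) * Lφ = Zm - Xm := by
      rw [mul_sub, sub_mul, LXL, LZL]
    have hv2 : Zm - Xm - (Xm - Zm) = (-2 : ℂ) • (Xm - Zm) := by module
    rw [ContinuousLinearMap.smul_apply, hD, hv, hv2, smul_smul, ← Complex.coe_smul, smul_smul]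
    congr 1
    push_cast
    ring
  have h3 : (t • D) Ym = ((-(2 * γ * t) : ℝ) : ℂ) • Ym := by
    have hv2 : -Ym - Ym = (-2 : ℂ) • Ym := by module
    rw [ContinuousLinearMap.smul_apply, hD, LYL, hv2, smul_smul, ← Complex.coe_smul, smul_smul]
    congr 1
    push_cast
    ring
  -- exponential action
  have hEX : NormedSpace.exp (t • D) Xm = (2 : ℂ)⁻¹ • ((Xm + Zm) + e • (Xm - Zm)) := by
    have hXdec : Xm = (2 : ℂ)⁻¹ • ((Xm + Zm) + (Xm - Zm)) := by module
    conv_lhs => rw [hXdec]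
    rw [map_smul, map_add, exp_apply_eigen _ _ _ h1, exp_apply_eigen _ _ _ h2, hexpc,
      NormedSpace.exp_zero, one_smul]
  have hEZ : NormedSpace.exp (t • D) Zm = (2 : ℂ)⁻¹ • ((Xm + Zm) - e • (Xm - Zm)) := by
    have hZdec : Zm = (2 : ℂ)⁻¹ • ((Xm + Zm) - (Xm - Zm)) := by module
    conv_lhs => rw [hZdec]
    rw [map_smul, map_sub, exp_apply_eigen _ _ _ h1, exp_apply_eigen _ _ _ h2, hexpc,
      NormedSpace.exp_zero, one_smul]
  have hEY : NormedSpace.exp (t • D) Ym = e • Ym := by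
    rw [exp_apply_eigen _ _ _ h3, hexpc]
  -- real values of the Pauli eigenvalues
  have hfx' : fx = (1 + Real.exp (-(2 * γ * t))) / 2 := by
    have h := hfx
    rw [hEX] at h
    apply Complex.ofReal_injective
    rw [h]
    simp [Xm, Zm, he, Matrix.trace_fin_two, Matrix.mul_apply, Fin.sum_univ_two,
      Matrix.smul_apply, Matrix.add_apply, Matrix.sub_apply, smul_eq_mul]
    ring
  have hfz' : fz = (1 + Real.exp (-(2 * γ * t))) / 2 := by
    have h := hfz
    rw [hEZ] at h
    apply Complex.ofReal_injective
    rw [h]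
    simp [Xm, Zm, he, Matrix.trace_fin_two, Matrix.mul_apply, Fin.sum_univ_two,
      Matrix.smul_apply, Matrix.add_apply, Matrix.sub_apply, smul_eq_mul]
    ring
  have hfy' : fy = Real.exp (-(2 * γ * t)) := by
    have h := hfy
    rw [hEY] at h
    apply Complex.ofReal_injective
    rw [h]
    simp [Ym, he, Matrix.trace_fin_two, Matrix.mul_apply, Fin.sum_univ_two,
      Matrix.smul_apply, smul_eq_mul, Complex.ext_iff]
    ring_nf
    simp [Complex.I_sq]
  -- real arithmetic
  set u : ℝ := γ * t with hu
  have hu0 : 0 < u := mul_pos hγ ht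
  have hcoshval : (1 + Real.exp (-(2 * γ * t))) / 2 = Real.exp (-u) * Real.cosh u := by
    rw [Real.cosh_eq]
    have e1 : Real.exp (-u) * Real.exp u = 1 := by rw [← Real.exp_add]; simp
    have e2 : Real.exp (-u) * Real.exp (-u) = Real.exp (-(2 * γ * t)) := by
      rw [← Real.exp_add, hu]; ring_nf
    field_simp
    nlinarith [e1, e2]
  have hlfx : Real.log fx = -u + Real.log (Real.cosh u) := by
    rw [hfx', hcoshval, Real.log_mul (Real.exp_ne_zero _) (Real.cosh_pos u).ne',
      Real.log_exp]
  have hlfz : Real.log fz = -u + Real.log (Real.cosh u) := by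
    rw [hfz', hcoshval, Real.log_mul (Real.exp_ne_zero _) (Real.cosh_pos u).ne',
      Real.log_exp]
  have hlfy : Real.log fy = -(2 * u) := by
    rw [hfy', Real.log_exp, hu]; ring_nf
  have hLc : 0 < Real.log (Real.cosh u) :=
    Real.log_pos (Real.one_lt_cosh.2 (ne_of_gt hu0))
  refine ⟨?_, ?_, ?_, ?_⟩ <;> rw [hlfx, hlfy, hlfz] <;> [skip; skip; skip; nlinarith] <;> ring
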